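/- For a > 0 and p < a + 1, the function e^{F̃}(z) = a(a+1) / (|z|² (-log |z|²)^{a+2}) defined on the disk D = {z ∈ ℂ : |z| < 1/2} satisfies ∫_D e^{F̃} |F̃|^p dA < ∞, where dA is Lebesgue measure on ℂ; i.e., e^{F̃} ∈ L¹(log L)^p(D). Moreover, e^{F̃} ∉ L^q(D) for any q > 1. -/

import Mathlib

open MeasureTheory

section AuxLemmas

open Set Real
open scoped Real

open MeasureTheory Set Real
open scoped Real

lemma radial_integrableOn_iff {g : ℝ → ℝ} (hg : Measurable g) {R : ℝ} (hR : 0 < R) :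
    IntegrableOn (fun z : ℂ => g (‖z‖)) {z : ℂ | ‖z‖ < R} volume ↔
    IntegrableOn (fun r : ℝ => r * g r) (Set.Ioo 0 R) volume := by
  set G : ℝ × ℝ → ℝ := fun p => g (Real.sqrt (p.1 ^ 2 + p.2 ^ 2)) with hGdef
  set D : Set (ℝ × ℝ) := {p | Real.sqrt (p.1 ^ 2 + p.2 ^ 2) < R} with hDdef
  -- Step 1: transfer from ℂ to ℝ × ℝ
  have hpre : Complex.measurableEquivRealProd ⁻¹' D = {z : ℂ | ‖z‖ < R} := by
    ext z
    simp only [Set.mem_preimage, Complex.measurableEquivRealProd_apply, hDdef, Set.mem_setOf_eq]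
    rw [Complex.norm_def, Complex.normSq_apply]
    ring_nf
  have hfun : (G ∘ Complex.measurableEquivRealProd) = fun z : ℂ => g (‖z‖) := by
    funext z
    simp only [Function.comp_apply, Complex.measurableEquivRealProd_apply, hGdef]
    rw [Complex.norm_def, Complex.normSq_apply]
    ring_nf
  have h1 := Complex.volume_preserving_equiv_real_prod.integrableOn_comp_preimage
      Complex.measurableEquivRealProd.measurableEmbedding (f := G) (s := D)
  rw [hpre, hfun] at h1
  rw [h1]
  -- Step 2: remove the (null) slit
  have hnull : volume (polarCoord.sourceᶜ : Set (ℝ × ℝ)) = 0 :=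
    MeasureTheory.ae_eq_univ.1 polarCoord_source_ae_eq_univ
  have h2 : volume.restrict D = volume.restrict (D ∩ polarCoord.source) := by
    refine (Measure.restrict_congr_set ?_).symm
    rw [MeasureTheory.ae_eq_set]
    constructor
    · exact measure_mono_null (fun x hx => (hx.2 hx.1.1).elim) measure_empty
    · refine measure_mono_null (fun x hx => ?_) hnull
      simp only [Set.mem_diff, Set.mem_inter_iff, not_and, Set.mem_compl_iff] at *
      exact fun h => hx.2 hx.1 h
  rw [IntegrableOn, h2]
  -- Step 3: the image of the rectangle under polar coordinates
  set s : Set (ℝ × ℝ) := Set.Ioo 0 R ×ˢ Set.Ioo (-π) π with hsdef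
  have hssub : s ⊆ polarCoord.target := by
    rw [polarCoord_target]
    exact Set.prod_mono Set.Ioo_subset_Ioi_self le_rfl
  have himg : polarCoord.symm '' s = D ∩ polarCoord.source := by
    rw [polarCoord.symm_image_eq_source_inter_preimage hssub]
    ext q
    constructor
    · rintro ⟨hqs, hq⟩
      rw [Set.mem_preimage, Set.mem_prod] at hq
      exact ⟨hq.1.2, hqs⟩
    · rintro ⟨hqD, hqs⟩
      refine ⟨hqs, ?_⟩
      have hmem := polarCoord.map_source hqs
      rw [polarCoord_target, Set.mem_prod] at hmem
      rw [Set.mem_preimage, Set.mem_prod]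
      exact ⟨⟨hmem.1, hqD⟩, hmem.2⟩
  rw [← himg]
  -- Step 4: change of variables
  have hsm : MeasurableSet s := measurableSet_Ioo.prod measurableSet_Ioo
  set B : ℝ × ℝ → ℝ × ℝ →L[ℝ] ℝ × ℝ := fun p =>
    LinearMap.toContinuousLinearMap (Matrix.toLin (Module.Basis.finTwoProd ℝ) (Module.Basis.finTwoProd ℝ)
      !![Real.cos p.2, -p.1 * Real.sin p.2; Real.sin p.2, p.1 * Real.cos p.2]) with hBdef
  have hderiv : ∀ x ∈ s, HasFDerivWithinAt polarCoord.symm (B x) s x := fun x _ =>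
    (hasFDerivAt_polarCoord_symm x).hasFDerivWithinAt
  have hinj : Set.InjOn polarCoord.symm s := polarCoord.symm.injOn.mono hssub
  have B_det : ∀ p, (B p).det = p.1 := by
    intro p
    conv_rhs => rw [← one_mul p.1, ← Real.cos_sq_add_sin_sq p.2]
    simp only [hBdef, neg_mul, LinearMap.det_toContinuousLinearMap, LinearMap.det_toLin,
      Matrix.det_fin_two_of, sub_neg_eq_add]
    ring
  have h4 := integrableOn_image_iff_integrableOn_abs_det_fderiv_smul volume hsm hderiv hinj G
  rw [show Integrable G (volume.restrict (polarCoord.symm '' s)) =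
    IntegrableOn G (polarCoord.symm '' s) volume from rfl, h4]
  -- the transformed integrand equals r * g r
  have hcongr : ∀ x ∈ s, |(B x).det| • G (polarCoord.symm x) = x.1 * g x.1 := by
    intro x hx
    rw [Set.mem_prod] at hx
    have hx1 : 0 < x.1 := hx.1.1
    rw [B_det, abs_of_pos hx1, smul_eq_mul]
    congr 1
    have : ((x.1 * Real.cos x.2) ^ 2 + (x.1 * Real.sin x.2) ^ 2) = x.1 ^ 2 := by
      have := Real.sin_sq_add_cos_sq x.2
      nlinarith [this]
    rw [hGdef]
    simp only [polarCoord_symm_apply]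
    rw [this, Real.sqrt_sq hx1.le]
  rw [integrableOn_congr_fun hcongr hsm]
  -- Step 5: reduce the product to the first factor
  have hFm : Measurable (fun r : ℝ => r * g r) := measurable_id.mul hg
  rw [IntegrableOn, hsdef, Measure.volume_eq_prod, ← Measure.prod_restrict,
    show (fun x : ℝ × ℝ => x.1 * g x.1) = (fun r : ℝ => r * g r) ∘ Prod.fst from rfl,
    ← integrable_map_measure hFm.aestronglyMeasurable measurable_fst.aemeasurable,
    Measure.map_fst_prod]
  have hν : (volume.restrict (Set.Ioo (-π) π)) Set.univ = ENNReal.ofReal (2 * π) := by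
    rw [Measure.restrict_apply_univ, Real.volume_Ioo]
    ring_nf
  rw [hν, integrable_smul_measure (by positivity) ENNReal.ofReal_ne_top]
  rfl

lemma integrableOn_Ioo_exp_neg_iff (F : ℝ → ℝ) (c : ℝ) :
    IntegrableOn F (Set.Ioo 0 (Real.exp (-c))) volume ↔
    IntegrableOn (fun x => Real.exp (-x) * F (Real.exp (-x))) (Set.Ioi c) volume := by
  have himg : (fun x : ℝ => Real.exp (-x)) '' Set.Ioi c = Set.Ioo 0 (Real.exp (-c)) := by
    ext y
    constructor
    · rintro ⟨x, hx, rfl⟩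
      exact ⟨Real.exp_pos _, Real.exp_lt_exp.2 (by simpa using hx)⟩
    · rintro ⟨hy0, hy⟩
      refine ⟨-Real.log y, ?_, by simp [Real.exp_log hy0]⟩
      have := Real.log_lt_log hy0 hy
      rw [Real.log_exp] at this
      simp only [Set.mem_Ioi]
      linarith
  have hderiv : ∀ x ∈ Set.Ioi c,
      HasDerivWithinAt (fun x : ℝ => Real.exp (-x)) (-Real.exp (-x)) (Set.Ioi c) x := by
    intro x _
    have h := (Real.hasDerivAt_exp (-x)).comp x (hasDerivAt_neg x)
    simpa [mul_comm, Function.comp_def] using h.hasDerivWithinAt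
  have hinj : Set.InjOn (fun x : ℝ => Real.exp (-x)) (Set.Ioi c) :=
    (Real.exp_injective.comp neg_injective).injOn
  have h := integrableOn_image_iff_integrableOn_abs_deriv_smul measurableSet_Ioi hderiv hinj F
  rw [himg] at h
  rw [h]
  refine integrableOn_congr_fun (fun x _ => ?_) measurableSet_Ioi
  rw [abs_neg, abs_of_pos (Real.exp_pos _), smul_eq_mul]


set_option maxHeartbeats 1000000 in
private lemma stmt_5_part1 (a p : ℝ) (ha : 0 < a) (hp : 0 < p) (hpa : p < a + 1) :
    IntegrableOn
      (fun z : ℂ =>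
        (a * (a + 1) / (‖z‖ ^ 2 * (-Real.log (‖z‖ ^ 2)) ^ (a + 2))) *
          |Real.log (a * (a + 1) /
            (‖z‖ ^ 2 * (-Real.log (‖z‖ ^ 2)) ^ (a + 2)))| ^ p)
      {z : ℂ | ‖z‖ < 1/2} volume := by
  have hA : (0:ℝ) < a * (a + 1) := by nlinarith
  set A := a * (a + 1) with hAdef
  set g : ℝ → ℝ := fun r =>
    (A / (r ^ 2 * (-Real.log (r ^ 2)) ^ (a + 2))) *
      |Real.log (A / (r ^ 2 * (-Real.log (r ^ 2)) ^ (a + 2)))| ^ p with hgdef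
  have hm1 : Measurable (fun r : ℝ => A / (r ^ 2 * (-Real.log (r ^ 2)) ^ (a + 2))) := by
    measurability
  have hg : Measurable g := by rw [hgdef]; measurability
  have key : IntegrableOn (fun r : ℝ => r * g r) (Set.Ioo 0 (1/2)) volume := by
    have h12 : (1/2 : ℝ) = Real.exp (-(Real.log 2)) := by
      rw [Real.exp_neg, Real.exp_log (by norm_num : (0:ℝ) < 2)]
      norm_num
    rw [h12, integrableOn_Ioo_exp_neg_iff]
    set C : ℝ := |Real.log A| + a + 3 with hCdef
    have hC : 0 < C := by positivity
    have hlt : p - a - 2 < -1 := by linarith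
    have hmaj : IntegrableOn (fun x : ℝ => (A * C ^ p * 2 ^ (p - a - 2)) * x ^ (p - a - 2))
        (Set.Ioi (Real.log 2)) volume :=
      (integrableOn_Ioi_rpow_of_lt hlt (Real.log_pos (by norm_num))).const_mul _
    apply hmaj.mono'
    · exact ((measurable_exp.comp measurable_neg).mul
        ((measurable_id.mul hg).comp (measurable_exp.comp measurable_neg))).aestronglyMeasurable
    · rw [ae_restrict_iff' measurableSet_Ioi]
      refine Filter.Eventually.of_forall (fun x hx => ?_)
      have hx' : Real.log 2 < x := hx
      have hxpos : 0 < x := lt_trans (Real.log_pos (by norm_num)) hx'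
      have h2x : (0:ℝ) < 2 * x := by linarith
      have h2x1 : (1:ℝ) ≤ 2 * x := by
        have := Real.log_two_gt_d9
        linarith
      -- rewrite the integrand
      have hr2 : (Real.exp (-x)) ^ 2 = Real.exp (-(2 * x)) := by
        rw [sq, ← Real.exp_add]; ring_nf
      have hlogr2 : Real.log ((Real.exp (-x)) ^ 2) = -(2 * x) := by
        rw [hr2, Real.log_exp]
      have hT : (0:ℝ) < (2 * x) ^ (a + 2) := Real.rpow_pos_of_pos h2x _
      have hE : Real.log (A / (Real.exp (-(2 * x)) * (2 * x) ^ (a + 2)))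
          = Real.log A + 2 * x - (a + 2) * Real.log (2 * x) := by
        rw [Real.log_div hA.ne' (by positivity), Real.log_mul (Real.exp_ne_zero _) hT.ne',
          Real.log_exp, Real.log_rpow h2x]
        ring
      set E : ℝ := Real.log A + 2 * x - (a + 2) * Real.log (2 * x) with hEdef
      have hlog2x0 : 0 ≤ Real.log (2 * x) := Real.log_nonneg h2x1
      have hlog2x : Real.log (2 * x) ≤ 2 * x := by
        have := Real.log_le_sub_one_of_pos h2x
        linarith
      have habsE : |E| ≤ C * (2 * x) := by
        have h1 := le_abs_self (Real.log A)
        have h2 := neg_abs_le (Real.log A)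
        have hp1 : (a+2) * Real.log (2*x) ≤ (a+2) * (2*x) :=
          mul_le_mul_of_nonneg_left hlog2x (by linarith)
        have hp2 : 0 ≤ (a+2) * Real.log (2*x) := mul_nonneg (by linarith) hlog2x0
        have hp3 : |Real.log A| ≤ |Real.log A| * (2*x) :=
          le_mul_of_one_le_right (abs_nonneg _) h2x1
        rw [abs_le, hEdef, hCdef]
        constructor <;> nlinarith
      -- value computation
      have key : Real.exp (-(2*x)) * (A / (Real.exp (-(2*x)) * (2*x) ^ (a+2)))
          = A / (2*x) ^ (a+2) := by
        rw [eq_div_iff hT.ne']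
        field_simp
      have hgx : g (Real.exp (-x)) = A / (Real.exp (-(2*x)) * (2*x) ^ (a+2)) * |E| ^ p := by
        simp only [hgdef]
        rw [hlogr2, hr2, neg_neg, hE]
      have hval : Real.exp (-x) * (Real.exp (-x) * g (Real.exp (-x)))
          = A / (2 * x) ^ (a + 2) * |E| ^ p := by
        rw [hgx, ← mul_assoc, ← Real.exp_add, show -x + -x = -(2*x) by ring, ← mul_assoc, key]
      have hnn : 0 ≤ Real.exp (-x) * (Real.exp (-x) * g (Real.exp (-x))) := by
        rw [hval]
        positivity
      rw [Real.norm_eq_abs, abs_of_nonneg hnn, hval]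
      calc A / (2 * x) ^ (a + 2) * |E| ^ p
          ≤ A / (2 * x) ^ (a + 2) * (C * (2 * x)) ^ p := by
            apply mul_le_mul_of_nonneg_left _ (by positivity)
            exact Real.rpow_le_rpow (abs_nonneg _) habsE hp.le
        _ = A * C ^ p * 2 ^ (p - a - 2) * x ^ (p - a - 2) := by
            rw [Real.mul_rpow hC.le h2x.le, show p - a - 2 = p - (a + 2) by ring,
              Real.mul_rpow (by norm_num : (0:ℝ) ≤ 2) hxpos.le,
              Real.mul_rpow (by norm_num : (0:ℝ) ≤ 2) hxpos.le,
              Real.rpow_sub (by norm_num : (0:ℝ) < 2), Real.rpow_sub hxpos]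
            have h2a : (0:ℝ) < 2 ^ (a+2) := Real.rpow_pos_of_pos (by norm_num) _
            have hxa : (0:ℝ) < x ^ (a+2) := Real.rpow_pos_of_pos hxpos _
            field_simp
  exact (radial_integrableOn_iff hg (by norm_num)).2 key

set_option maxHeartbeats 1000000 in
private lemma stmt_5_part2 (a p : ℝ) (ha : 0 < a) (hp : 0 < p) (hpa : p < a + 1) :
    ∀ q : ℝ, 1 < q →
      ¬ IntegrableOn
        (fun z : ℂ =>
          (a * (a + 1) /
            (‖z‖ ^ 2 * (-Real.log (‖z‖ ^ 2)) ^ (a + 2))) ^ q)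
        {z : ℂ | ‖z‖ < 1/2} volume := by
  intro q hq hI
  have hA : (0:ℝ) < a * (a + 1) := by nlinarith
  set A := a * (a + 1) with hAdef
  set g : ℝ → ℝ := fun r => (A / (r ^ 2 * (-Real.log (r ^ 2)) ^ (a + 2))) ^ q with hgdef
  have hg : Measurable g := by rw [hgdef]; measurability
  have key := (radial_integrableOn_iff hg (by norm_num : (0:ℝ) < 1/2)).1 hI
  have h12 : (1/2 : ℝ) = Real.exp (-(Real.log 2)) := by
    rw [Real.exp_neg, Real.exp_log (by norm_num : (0:ℝ) < 2)]
    norm_num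
  rw [h12, integrableOn_Ioo_exp_neg_iff] at key
  -- the transformed function
  set ψ : ℝ → ℝ := fun x => Real.exp (-x) * (Real.exp (-x) * g (Real.exp (-x))) with hψdef
  set c₀ : ℝ := A ^ q * 2 ^ (-((a + 2) * q)) with hc₀def
  have hc₀ : 0 < c₀ := by
    have := Real.rpow_pos_of_pos hA q
    have := Real.rpow_pos_of_pos (show (0:ℝ) < 2 by norm_num) (-((a + 2) * q))
    positivity
  -- pointwise formula for x > 0
  have heq : ∀ x : ℝ, 0 < x →
      ψ x = c₀ * (x ^ ((a + 2) * q) * Real.exp (-((2 * q - 2) * x)))⁻¹ := by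
    intro x hx
    have h2x : (0:ℝ) < 2 * x := by linarith
    have hr2 : (Real.exp (-x)) ^ 2 = Real.exp (-(2 * x)) := by
      rw [sq, ← Real.exp_add]; ring_nf
    have hlogr2 : Real.log ((Real.exp (-x)) ^ 2) = -(2 * x) := by rw [hr2, Real.log_exp]
    have hT : (0:ℝ) < (2 * x) ^ (a + 2) := Real.rpow_pos_of_pos h2x _
    have hgx : g (Real.exp (-x)) = (A / (Real.exp (-(2 * x)) * (2 * x) ^ (a + 2))) ^ q := by
      simp only [hgdef]
      rw [hlogr2, hr2, neg_neg]
    rw [hψdef]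
    simp only []
    rw [hgx]
    -- expand the rpow of the quotient
    rw [Real.div_rpow hA.le (by positivity), Real.mul_rpow (Real.exp_pos _).le hT.le,
      ← Real.exp_mul, ← Real.rpow_mul h2x.le,
      Real.mul_rpow (by norm_num : (0:ℝ) ≤ 2) hx.le]
    rw [show -(2*x)*q = (-x)*(2*q) by ring, Real.exp_mul]
    rw [hc₀def, Real.rpow_neg (by norm_num : (0:ℝ) ≤ 2)]
    have hy : (0:ℝ) < Real.exp (-x) := Real.exp_pos _
    have hyy : Real.exp (-x) ^ (2*q) = (Real.exp (-x) * Real.exp (-x)) * Real.exp (-x) ^ (2*q-2) := by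
      rw [show Real.exp (-x) * Real.exp (-x) = Real.exp (-x) ^ ((2:ℕ):ℝ) by
        rw [Real.rpow_natCast]; ring, ← Real.rpow_add hy]
      norm_num
    rw [show -((2*q-2)*x) = (-x)*(2*q-2) by ring, Real.exp_mul, hyy]
    have h2s : (0:ℝ) < 2 ^ ((a+2)*q) := Real.rpow_pos_of_pos (by norm_num) _
    have hxs : (0:ℝ) < x ^ ((a+2)*q) := Real.rpow_pos_of_pos hx _
    have hys : (0:ℝ) < Real.exp (-x) ^ (2*q-2) := Real.rpow_pos_of_pos hy _
    field_simp
  -- ψ tends to infinity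
  have htend0 : Filter.Tendsto (fun x : ℝ => x ^ ((a+2)*q) * Real.exp (-((2*q-2) * x)))
      Filter.atTop (nhds 0) := by
    have h := tendsto_rpow_mul_exp_neg_mul_atTop_nhds_zero ((a+2)*q) (2*q-2) (by linarith)
    exact h.congr (fun x => by rw [neg_mul])
  have hev0 : ∀ᶠ x in Filter.atTop,
      (fun x : ℝ => x ^ ((a+2)*q) * Real.exp (-((2*q-2) * x))) x ∈ Set.Ioi (0:ℝ) := by
    filter_upwards [Filter.eventually_gt_atTop 0] with x hx
    exact mul_pos (Real.rpow_pos_of_pos hx _) (Real.exp_pos _)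
  have htend1 : Filter.Tendsto (fun x : ℝ => (x ^ ((a+2)*q) * Real.exp (-((2*q-2) * x)))⁻¹)
      Filter.atTop Filter.atTop :=
    (tendsto_nhdsWithin_of_tendsto_nhds_of_eventually_within _ htend0 hev0).inv_tendsto_nhdsGT_zero
  have htend : Filter.Tendsto ψ Filter.atTop Filter.atTop := by
    apply Filter.Tendsto.congr' _ (htend1.const_mul_atTop hc₀)
    filter_upwards [Filter.eventually_gt_atTop 0] with x hx
    exact (heq x hx).symm
  obtain ⟨M, hM⟩ := Filter.eventually_atTop.1 (htend.eventually_ge_atTop 1)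
  have hfin := key.measure_ge_lt_top one_pos
  set K := max M (Real.log 2) with hKdef
  have hsub : Set.Ioi K ⊆ {x | 1 ≤ ψ x} := fun x hx =>
    hM x (le_of_lt (lt_of_le_of_lt (le_max_left _ _) hx))
  have hK : (volume.restrict (Set.Ioi (Real.log 2))) {x | 1 ≤ ψ x} = ⊤ := by
    refine top_unique ?_
    calc (⊤ : ENNReal) = volume (Set.Ioi K) := (Real.volume_Ioi).symm
      _ = (volume.restrict (Set.Ioi (Real.log 2))) (Set.Ioi K) := by
          rw [Measure.restrict_apply measurableSet_Ioi, Set.Ioi_inter_Ioi,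
            sup_eq_left.2 (le_max_right M (Real.log 2))]
      _ ≤ _ := measure_mono hsub
  rw [hK] at hfin
  exact absurd hfin (lt_irrefl _)

end AuxLemmas

/-- e^{F̃}(z) = a(a+1)/(|z|²(-log|z|²)^{a+2}) belongs to L¹(log L)^p on the disk of
radius 1/2 for p < a+1, but to no L^q with q > 1. -/
theorem stmt_5 (a p : ℝ) (ha : 0 < a) (hp : 0 < p) (hpa : p < a + 1) :
    IntegrableOn
      (fun z : ℂ =>
        (a * (a + 1) / (‖z‖ ^ 2 * (-Real.log (‖z‖ ^ 2)) ^ (a + 2))) *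
          |Real.log (a * (a + 1) /
            (‖z‖ ^ 2 * (-Real.log (‖z‖ ^ 2)) ^ (a + 2)))| ^ p)
      {z : ℂ | ‖z‖ < 1/2} volume ∧
    ∀ q : ℝ, 1 < q →
      ¬ IntegrableOn
        (fun z : ℂ =>
          (a * (a + 1) /
            (‖z‖ ^ 2 * (-Real.log (‖z‖ ^ 2)) ^ (a + 2))) ^ q)
        {z : ℂ | ‖z‖ < 1/2} volume := by
  exact ⟨stmt_5_part1 a p ha hp hpa, stmt_5_part2 a p ha hp hpa⟩
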